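/- Given scalars u_t and λ_t > 0 satisfying the Afriat inequalities, the constructed utility U(β) = min_t {u_t + λ_t α_t'(β - β_t)} rationalizes the dataset: for each t, U(β_t) = u_t and β_t maximizes U over the budget set {β ∈ R^m_+ : α_t'β ≤ 1}, provided α_t'β_t = 1 for all t. -/
import Mathlib


open Matrix

/-- The constructed Afriat utility rationalizes the dataset:
`U(β_t) = u_t` and `β_t` maximizes `U` over the budget set
`{β ≥ 0 : α_t'β ≤ 1}`, provided the budget constraints are active. -/
theorem afriat_constructed_utility_rationalizes {m N : ℕ} (hN : 0 < N)
    (α β : Fin N → Fin m → ℝ) (hα : ∀ t i, 0 < α t i) (hβ : ∀ t i, 0 ≤ β t i)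
    (hactive : ∀ t, α t ⬝ᵥ β t = 1)
    (us ls : Fin N → ℝ) (hls : ∀ t, 0 < ls t)
    (hAfriat : ∀ s t, us s - us t - ls t * (α t ⬝ᵥ (β s - β t)) ≤ 0)
    (U : (Fin m → ℝ) → ℝ)
    (hU : ∀ b, U b = Finset.univ.inf' ⟨⟨0, hN⟩, Finset.mem_univ _⟩
      (fun t => us t + ls t * (α t ⬝ᵥ (b - β t)))) :
    ∀ t, U (β t) = us t ∧
      ∀ b : Fin m → ℝ, (∀ i, 0 ≤ b i) → α t ⬝ᵥ b ≤ 1 → U b ≤ U (β t) := by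
  have key : ∀ t, U (β t) = us t := by
    intro t
    rw [hU]
    apply le_antisymm
    · calc Finset.univ.inf' _ (fun s => us s + ls s * (α s ⬝ᵥ (β t - β s)))
          ≤ us t + ls t * (α t ⬝ᵥ (β t - β t)) :=
            Finset.inf'_le _ (Finset.mem_univ t)
        _ = us t := by simp
    · apply Finset.le_inf'
      intro s _
      have h := hAfriat t s
      linarith
  intro t
  refine ⟨key t, fun b hb hbud => ?_⟩
  rw [key t, hU]
  calc Finset.univ.inf' _ (fun s => us s + ls s * (α s ⬝ᵥ (b - β s)))
      ≤ us t + ls t * (α t ⬝ᵥ (b - β t)) := Finset.inf'_le _ (Finset.mem_univ t)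
    _ ≤ us t := by
        have h1 : α t ⬝ᵥ (b - β t) = α t ⬝ᵥ b - α t ⬝ᵥ β t := dotProduct_sub _ _ _
        have h2 : α t ⬝ᵥ (b - β t) ≤ 0 := by rw [h1, hactive t]; linarith
        nlinarith [hls t]
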